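/- Let r ≤ t be natural numbers, α₁,…,α_r ≥ 0 with Σ_{k=1}^r α_k = 1, and let ξ¹,…,ξᵗ ∈ ℝ^k be vectors with nonnegative entries. Define z_k := (ξᵏ; w − Fᵀξᵏ; 1) ∈ ℝ^{n+1} for 1 ≤ k ≤ r and z_k := (ξᵏ; −Fᵀξᵏ; 0) ∈ ℝ^{n+1} for r < k ≤ t, and set X := Σ_{k=1}^r α_k z_k z_kᵀ + Σ_{k=r+1}^t z_k z_kᵀ. If every entry of X is nonnegative, then the pair (Y, y) with Y := Σ_{k=1}^r α_k ξᵏ(ξᵏ)ᵀ + Σ_{k=r+1}^t ξᵏ(ξᵏ)ᵀ and y := Σ_{k=1}^r α_k ξᵏ is Shor-feasible for the data (F, w), and ⟨Ĥ, X⟩ = ⟨Q, Y⟩ + 2 dᵀ y + v. (This is the converse direction of the equivalence between the doubly nonnegative relaxation and the Shor relaxation, applied to the completely positive decomposition of a feasible X.) -/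

import Mathlib

open Matrix

noncomputable section

/-- Frobenius (trace) inner product of real matrices. -/
def frob {ι : Type} [Fintype ι] (A B : Matrix ι ι ℝ) : ℝ := (Aᵀ * B).trace

/-- `(Y, y)` is Shor-feasible for the data `(F, w)`. -/
def ShorFeasible {k : ℕ} {ι : Type} [Fintype ι]
    (F : Matrix (Fin k) ι ℝ) (w : ι → ℝ)
    (Y : Matrix (Fin k) (Fin k) ℝ) (y : Fin k → ℝ) : Prop :=
  (∀ i, Fᵀ.mulVec y i ≤ w i) ∧
  (∀ i, 0 ≤ y i) ∧
  (∀ i j, 0 ≤ (Fᵀ * Y * F - vecMulVec w (Fᵀ.mulVec y) - vecMulVec (Fᵀ.mulVec y) w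
      + vecMulVec w w) i j) ∧
  (∀ i j, 0 ≤ Y i j) ∧
  (∀ i j, 0 ≤ (vecMulVec w y - Fᵀ * Y) i j) ∧
  (fromBlocks Y (Matrix.of fun i (_ : Unit) => y i)
    (Matrix.of fun (_ : Unit) j => y j) 1).PosSemidef

/-- The objective matrix `Ĥ` of the DNN relaxation. -/
def Hhat {k m : ℕ} (Q : Matrix (Fin k) (Fin k) ℝ) (d : Fin k → ℝ) (v : ℝ) :
    Matrix ((Fin k ⊕ Fin m) ⊕ Unit) ((Fin k ⊕ Fin m) ⊕ Unit) ℝ :=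
  fromBlocks (fromBlocks Q 0 0 0)
    (Matrix.of fun i _ => Sum.elim d (fun _ => (0 : ℝ)) i)
    (Matrix.of fun _ j => Sum.elim d (fun _ => (0 : ℝ)) j)
    (Matrix.of fun _ _ => v)

/-- The vectors `z_K := (ξᵏ; w − Fᵀξᵏ; 1)` for `K < r`, and `(ξᵏ; −Fᵀξᵏ; 0)` otherwise. -/
def zvec {k m : ℕ} (F : Matrix (Fin k) (Fin m) ℝ) (w : Fin m → ℝ) (r : ℕ)
    (ξ : ℕ → Fin k → ℝ) (K : ℕ) : (Fin k ⊕ Fin m) ⊕ Unit → ℝ :=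
  if K < r then
    Sum.elim (Sum.elim (ξ K) (fun b => w b - Fᵀ.mulVec (ξ K) b)) (fun _ => (1 : ℝ))
  else
    Sum.elim (Sum.elim (ξ K) (fun b => - Fᵀ.mulVec (ξ K) b)) (fun _ => (0 : ℝ))

/-- `X := Σ_{K<r} α_K z_K z_Kᵀ + Σ_{r≤K<t} z_K z_Kᵀ`. -/
def bigX {k m : ℕ} (F : Matrix (Fin k) (Fin m) ℝ) (w : Fin m → ℝ) (r t : ℕ)
    (α : ℕ → ℝ) (ξ : ℕ → Fin k → ℝ) :
    Matrix ((Fin k ⊕ Fin m) ⊕ Unit) ((Fin k ⊕ Fin m) ⊕ Unit) ℝ :=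
  ∑ K ∈ Finset.range r, α K • vecMulVec (zvec F w r ξ K) (zvec F w r ξ K)
    + ∑ K ∈ Finset.Ico r t, vecMulVec (zvec F w r ξ K) (zvec F w r ξ K)

/-- `Y := Σ_{K<r} α_K ξᵏ(ξᵏ)ᵀ + Σ_{r≤K<t} ξᵏ(ξᵏ)ᵀ`. -/
def Ymat {k : ℕ} (r t : ℕ) (α : ℕ → ℝ) (ξ : ℕ → Fin k → ℝ) :
    Matrix (Fin k) (Fin k) ℝ :=
  ∑ K ∈ Finset.range r, α K • vecMulVec (ξ K) (ξ K)
    + ∑ K ∈ Finset.Ico r t, vecMulVec (ξ K) (ξ K)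

/-- `y := Σ_{K<r} α_K ξᵏ`. -/
def yvec {k : ℕ} (r : ℕ) (α : ℕ → ℝ) (ξ : ℕ → Fin k → ℝ) : Fin k → ℝ :=
  ∑ K ∈ Finset.range r, α K • ξ K

section AuxLemmas

open Finset

lemma psd_aux' {n : Type} [Fintype n] (r t : ℕ) (α : ℕ → ℝ) (hα : ∀ K < r, 0 ≤ α K)
    (u : ℕ → n → ℝ) :
    (∑ K ∈ Finset.range r, α K • vecMulVec (u K) (u K)
      + ∑ K ∈ Finset.Ico r t, vecMulVec (u K) (u K)).PosSemidef := by
  refine Matrix.PosSemidef.of_dotProduct_mulVec_nonneg ?_ ?_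
  · ext i j
    simp [Matrix.conjTranspose_apply, Matrix.add_apply, Matrix.sum_apply, Matrix.smul_apply,
      vecMulVec_apply, mul_comm]
  · intro x
    have hsx : star x = x := funext fun i => star_trivial _
    have hmv : ∀ v : n → ℝ, vecMulVec v v *ᵥ x = (v ⬝ᵥ x) • v := by
      intro v; ext i
      show ∑ j, (v i * v j) * x j = (∑ j, v j * x j) * v i
      rw [Finset.sum_mul]; exact Finset.sum_congr rfl fun j _ => by ring
    have hsum_mv : ∀ (s : Finset ℕ) (A : ℕ → Matrix n n ℝ),
        (∑ K ∈ s, A K) *ᵥ x = ∑ K ∈ s, A K *ᵥ x := by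
      intro s A; ext i
      simp only [mulVec, dotProduct, Matrix.sum_apply, Finset.sum_apply, Finset.sum_mul]
      exact Finset.sum_comm
    have hdp_sum : ∀ (s : Finset ℕ) (f : ℕ → n → ℝ),
        x ⬝ᵥ (∑ K ∈ s, f K) = ∑ K ∈ s, x ⬝ᵥ f K := by
      intro s f
      simp only [dotProduct, Finset.sum_apply, Finset.mul_sum]
      exact Finset.sum_comm
    rw [hsx, add_mulVec, dotProduct_add, hsum_mv, hsum_mv, hdp_sum, hdp_sum]
    apply add_nonneg
    · apply Finset.sum_nonneg; intro K hK
      rw [smul_mulVec, hmv, dotProduct_smul, dotProduct_smul, smul_eq_mul, smul_eq_mul,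
        dotProduct_comm x (u K)]
      exact mul_nonneg (hα _ (Finset.mem_range.1 hK)) (mul_self_nonneg _)
    · apply Finset.sum_nonneg; intro K _
      rw [hmv, dotProduct_smul, smul_eq_mul, dotProduct_comm x (u K)]
      exact mul_self_nonneg _

variable {k m : ℕ} (F : Matrix (Fin k) (Fin m) ℝ) (w : Fin m → ℝ) (r t : ℕ)
  (α : ℕ → ℝ) (ξ : ℕ → Fin k → ℝ)

lemma aux_zvec_a (K : ℕ) (i : Fin k) : zvec F w r ξ K (Sum.inl (Sum.inl i)) = ξ K i := by
  unfold zvec; split <;> rfl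

lemma aux_zvec_b_lt {K : ℕ} (h : K < r) (b : Fin m) :
    zvec F w r ξ K (Sum.inl (Sum.inr b)) = w b - Fᵀ.mulVec (ξ K) b := by
  simp [zvec, h]

lemma aux_zvec_b_ge {K : ℕ} (h : ¬ K < r) (b : Fin m) :
    zvec F w r ξ K (Sum.inl (Sum.inr b)) = - Fᵀ.mulVec (ξ K) b := by
  simp [zvec, h]

lemma aux_zvec_u_lt {K : ℕ} (h : K < r) (u : Unit) : zvec F w r ξ K (Sum.inr u) = 1 := by
  simp [zvec, h]

lemma aux_zvec_u_ge {K : ℕ} (h : ¬ K < r) (u : Unit) : zvec F w r ξ K (Sum.inr u) = 0 := by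
  simp [zvec, h]

lemma aux_bigX_apply (i j : (Fin k ⊕ Fin m) ⊕ Unit) :
    bigX F w r t α ξ i j
      = (∑ K ∈ Finset.range r, α K * (zvec F w r ξ K i * zvec F w r ξ K j))
        + ∑ K ∈ Finset.Ico r t, zvec F w r ξ K i * zvec F w r ξ K j := by
  simp [bigX, Matrix.sum_apply, Matrix.vecMulVec_apply]

lemma aux_Ymat_apply (i j : Fin k) :
    Ymat r t α ξ i j
      = (∑ K ∈ Finset.range r, α K * (ξ K i * ξ K j))
        + ∑ K ∈ Finset.Ico r t, ξ K i * ξ K j := by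
  simp [Ymat, Matrix.sum_apply, Matrix.vecMulVec_apply]

lemma aux_yvec_apply (i : Fin k) : yvec r α ξ i = ∑ K ∈ Finset.range r, α K * ξ K i := by
  simp [yvec, Finset.sum_apply]

lemma aux_mulVec_yvec (b : Fin m) :
    Fᵀ.mulVec (yvec r α ξ) b = ∑ K ∈ Finset.range r, α K * Fᵀ.mulVec (ξ K) b := by
  simp only [mulVec, dotProduct, yvec, Finset.sum_apply, Pi.smul_apply, smul_eq_mul,
    Finset.mul_sum]
  rw [Finset.sum_comm]
  exact Finset.sum_congr rfl fun K _ => Finset.sum_congr rfl fun j _ => by ring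

lemma aux_FtvvF (u : Fin k → ℝ) :
    Fᵀ * vecMulVec u u * F = vecMulVec (Fᵀ *ᵥ u) (Fᵀ *ᵥ u) := by
  rw [vecMulVec_eq Unit, vecMulVec_eq Unit, Matrix.mul_assoc, Matrix.mul_assoc,
    ← replicateRow_vecMul, mulVec_transpose, ← Matrix.mul_assoc, ← replicateCol_mulVec, mulVec_transpose]

lemma aux_Ftvv (u : Fin k → ℝ) :
    Fᵀ * vecMulVec u u = vecMulVec (Fᵀ *ᵥ u) u := by
  rw [vecMulVec_eq Unit, vecMulVec_eq Unit, ← Matrix.mul_assoc, ← replicateCol_mulVec]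

lemma aux_FtYF :
    Fᵀ * Ymat r t α ξ * F
      = ∑ K ∈ Finset.range r, α K • vecMulVec (Fᵀ *ᵥ ξ K) (Fᵀ *ᵥ ξ K)
        + ∑ K ∈ Finset.Ico r t, vecMulVec (Fᵀ *ᵥ ξ K) (Fᵀ *ᵥ ξ K) := by
  simp only [Ymat, Matrix.mul_add, Matrix.add_mul, Matrix.mul_sum, Matrix.sum_mul,
    Matrix.mul_smul, Matrix.smul_mul, aux_FtvvF]

lemma aux_FtY :
    Fᵀ * Ymat r t α ξ
      = ∑ K ∈ Finset.range r, α K • vecMulVec (Fᵀ *ᵥ ξ K) (ξ K)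
        + ∑ K ∈ Finset.Ico r t, vecMulVec (Fᵀ *ᵥ ξ K) (ξ K) := by
  simp only [Ymat, Matrix.mul_add, Matrix.mul_sum, Matrix.mul_smul, aux_Ftvv]

end AuxLemmas


theorem dnn_decomposition_to_shor_feasible {k m : ℕ} (hk : 1 ≤ k) (hm : 1 ≤ m)
    (F : Matrix (Fin k) (Fin m) ℝ) (w : Fin m → ℝ)
    (Q : Matrix (Fin k) (Fin k) ℝ) (hQ : Q.IsSymm) (d : Fin k → ℝ) (v : ℝ)
    (r t : ℕ) (hrt : r ≤ t)
    (α : ℕ → ℝ) (hα : ∀ K < r, 0 ≤ α K) (hαsum : ∑ K ∈ Finset.range r, α K = 1)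
    (ξ : ℕ → Fin k → ℝ) (hξ : ∀ K < t, ∀ i, 0 ≤ ξ K i)
    (hXnn : ∀ i j, 0 ≤ bigX F w r t α ξ i j) :
    ShorFeasible F w (Ymat r t α ξ) (yvec r α ξ) ∧
    frob (Hhat (m := m) Q d v) (bigX F w r t α ξ)
      = frob Q (Ymat r t α ξ) + 2 * (d ⬝ᵥ yvec r α ξ) + v := by
  classical
  -- entries of bigX
  have hXaa : ∀ i j : Fin k, bigX F w r t α ξ (Sum.inl (Sum.inl i)) (Sum.inl (Sum.inl j))
      = Ymat r t α ξ i j := by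
    intro i j
    rw [aux_bigX_apply, aux_Ymat_apply]
    simp only [aux_zvec_a]
  have hXau : ∀ (i : Fin k) (u : Unit),
      bigX F w r t α ξ (Sum.inl (Sum.inl i)) (Sum.inr u) = yvec r α ξ i := by
    intro i u
    have h1 : (∑ K ∈ Finset.range r,
        α K * (zvec F w r ξ K (Sum.inl (Sum.inl i)) * zvec F w r ξ K (Sum.inr u)))
        = ∑ K ∈ Finset.range r, α K * ξ K i :=
      Finset.sum_congr rfl fun K hK => by
        rw [aux_zvec_a, aux_zvec_u_lt F w r ξ (Finset.mem_range.1 hK), mul_one]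
    have h2 : (∑ K ∈ Finset.Ico r t,
        zvec F w r ξ K (Sum.inl (Sum.inl i)) * zvec F w r ξ K (Sum.inr u)) = 0 :=
      Finset.sum_eq_zero fun K hK => by
        rw [aux_zvec_u_ge F w r ξ (not_lt.2 (Finset.mem_Ico.1 hK).1), mul_zero]
    rw [aux_bigX_apply, h1, h2, add_zero, aux_yvec_apply]
  have hXua : ∀ (u : Unit) (j : Fin k),
      bigX F w r t α ξ (Sum.inr u) (Sum.inl (Sum.inl j)) = yvec r α ξ j := by
    intro u j
    have h1 : (∑ K ∈ Finset.range r,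
        α K * (zvec F w r ξ K (Sum.inr u) * zvec F w r ξ K (Sum.inl (Sum.inl j))))
        = ∑ K ∈ Finset.range r, α K * ξ K j :=
      Finset.sum_congr rfl fun K hK => by
        rw [aux_zvec_a, aux_zvec_u_lt F w r ξ (Finset.mem_range.1 hK), one_mul]
    have h2 : (∑ K ∈ Finset.Ico r t,
        zvec F w r ξ K (Sum.inr u) * zvec F w r ξ K (Sum.inl (Sum.inl j))) = 0 :=
      Finset.sum_eq_zero fun K hK => by
        rw [aux_zvec_u_ge F w r ξ (not_lt.2 (Finset.mem_Ico.1 hK).1), zero_mul]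
    rw [aux_bigX_apply, h1, h2, add_zero, aux_yvec_apply]
  have hXuu : ∀ (u u' : Unit), bigX F w r t α ξ (Sum.inr u) (Sum.inr u') = 1 := by
    intro u u'
    have h1 : (∑ K ∈ Finset.range r,
        α K * (zvec F w r ξ K (Sum.inr u) * zvec F w r ξ K (Sum.inr u')))
        = ∑ K ∈ Finset.range r, α K :=
      Finset.sum_congr rfl fun K hK => by
        simp [aux_zvec_u_lt F w r ξ (Finset.mem_range.1 hK)]
    have h2 : (∑ K ∈ Finset.Ico r t,
        zvec F w r ξ K (Sum.inr u) * zvec F w r ξ K (Sum.inr u')) = 0 :=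
      Finset.sum_eq_zero fun K hK => by
        rw [aux_zvec_u_ge F w r ξ (not_lt.2 (Finset.mem_Ico.1 hK).1), zero_mul]
    rw [aux_bigX_apply, h1, h2, add_zero, hαsum]
  -- condition 1
  have cond1 : ∀ b, Fᵀ.mulVec (yvec r α ξ) b ≤ w b := by
    intro b
    have h := hXnn (Sum.inl (Sum.inr b)) (Sum.inr ())
    rw [aux_bigX_apply] at h
    have h1 : (∑ K ∈ Finset.range r,
        α K * (zvec F w r ξ K (Sum.inl (Sum.inr b)) * zvec F w r ξ K (Sum.inr ())))
        = ∑ K ∈ Finset.range r, (w b * α K - α K * Fᵀ.mulVec (ξ K) b) :=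
      Finset.sum_congr rfl fun K hK => by
        rw [aux_zvec_b_lt F w r ξ (Finset.mem_range.1 hK),
          aux_zvec_u_lt F w r ξ (Finset.mem_range.1 hK)]; ring
    have h2 : (∑ K ∈ Finset.Ico r t,
        zvec F w r ξ K (Sum.inl (Sum.inr b)) * zvec F w r ξ K (Sum.inr ())) = 0 :=
      Finset.sum_eq_zero fun K hK => by
        rw [aux_zvec_u_ge F w r ξ (not_lt.2 (Finset.mem_Ico.1 hK).1), mul_zero]
    rw [h1, h2, add_zero, Finset.sum_sub_distrib, ← Finset.mul_sum, hαsum, mul_one,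
      ← aux_mulVec_yvec] at h
    linarith
  -- condition 2
  have cond2 : ∀ i, 0 ≤ yvec r α ξ i := by
    intro i
    rw [aux_yvec_apply]
    exact Finset.sum_nonneg fun K hK => mul_nonneg (hα K (Finset.mem_range.1 hK))
      (hξ K (lt_of_lt_of_le (Finset.mem_range.1 hK) hrt) i)
  -- condition 3
  have cond3 : ∀ a b, 0 ≤ (Fᵀ * Ymat r t α ξ * F
      - vecMulVec w (Fᵀ.mulVec (yvec r α ξ)) - vecMulVec (Fᵀ.mulVec (yvec r α ξ)) w
      + vecMulVec w w) a b := by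
    intro a b
    have h := hXnn (Sum.inl (Sum.inr a)) (Sum.inl (Sum.inr b))
    rw [aux_bigX_apply] at h
    have h1 : (∑ K ∈ Finset.range r,
        α K * (zvec F w r ξ K (Sum.inl (Sum.inr a)) * zvec F w r ξ K (Sum.inl (Sum.inr b))))
        = ∑ K ∈ Finset.range r,
            α K * ((w a - Fᵀ.mulVec (ξ K) a) * (w b - Fᵀ.mulVec (ξ K) b)) :=
      Finset.sum_congr rfl fun K hK => by
        rw [aux_zvec_b_lt F w r ξ (Finset.mem_range.1 hK) a,
          aux_zvec_b_lt F w r ξ (Finset.mem_range.1 hK) b]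
    have h2 : (∑ K ∈ Finset.Ico r t,
        zvec F w r ξ K (Sum.inl (Sum.inr a)) * zvec F w r ξ K (Sum.inl (Sum.inr b)))
        = ∑ K ∈ Finset.Ico r t, Fᵀ.mulVec (ξ K) a * Fᵀ.mulVec (ξ K) b :=
      Finset.sum_congr rfl fun K hK => by
        rw [aux_zvec_b_ge F w r ξ (not_lt.2 (Finset.mem_Ico.1 hK).1) a,
          aux_zvec_b_ge F w r ξ (not_lt.2 (Finset.mem_Ico.1 hK).1) b, neg_mul_neg]
    have hsum : (∑ K ∈ Finset.range r,
        α K * ((w a - Fᵀ.mulVec (ξ K) a) * (w b - Fᵀ.mulVec (ξ K) b)))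
        = (∑ K ∈ Finset.range r, α K * (Fᵀ.mulVec (ξ K) a * Fᵀ.mulVec (ξ K) b))
          - w a * (∑ K ∈ Finset.range r, α K * Fᵀ.mulVec (ξ K) b)
          - (∑ K ∈ Finset.range r, α K * Fᵀ.mulVec (ξ K) a) * w b
          + (∑ K ∈ Finset.range r, α K) * (w a * w b) := by
      rw [Finset.mul_sum, Finset.sum_mul, Finset.sum_mul, ← Finset.sum_sub_distrib,
        ← Finset.sum_sub_distrib, ← Finset.sum_add_distrib]
      exact Finset.sum_congr rfl fun K _ => by ring
    rw [h1, h2, hsum, hαsum, one_mul, ← aux_mulVec_yvec, ← aux_mulVec_yvec] at h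
    have hentry : (Fᵀ * Ymat r t α ξ * F) a b
        = (∑ K ∈ Finset.range r, α K * (Fᵀ.mulVec (ξ K) a * Fᵀ.mulVec (ξ K) b))
          + ∑ K ∈ Finset.Ico r t, Fᵀ.mulVec (ξ K) a * Fᵀ.mulVec (ξ K) b := by
      rw [aux_FtYF]
      simp [Matrix.sum_apply, vecMulVec_apply]
    simp only [Matrix.sub_apply, Matrix.add_apply, vecMulVec_apply, hentry]
    linarith
  -- condition 4
  have cond4 : ∀ i j, 0 ≤ Ymat r t α ξ i j := by
    intro i j
    rw [aux_Ymat_apply]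
    refine add_nonneg (Finset.sum_nonneg fun K hK => ?_) (Finset.sum_nonneg fun K hK => ?_)
    · exact mul_nonneg (hα K (Finset.mem_range.1 hK))
        (mul_nonneg (hξ K (lt_of_lt_of_le (Finset.mem_range.1 hK) hrt) i)
          (hξ K (lt_of_lt_of_le (Finset.mem_range.1 hK) hrt) j))
    · exact mul_nonneg (hξ K (Finset.mem_Ico.1 hK).2 i) (hξ K (Finset.mem_Ico.1 hK).2 j)
  -- condition 5
  have cond5 : ∀ (b : Fin m) (i : Fin k),
      0 ≤ (vecMulVec w (yvec r α ξ) - Fᵀ * Ymat r t α ξ) b i := by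
    intro b i
    have h := hXnn (Sum.inl (Sum.inr b)) (Sum.inl (Sum.inl i))
    rw [aux_bigX_apply] at h
    have h1 : (∑ K ∈ Finset.range r,
        α K * (zvec F w r ξ K (Sum.inl (Sum.inr b)) * zvec F w r ξ K (Sum.inl (Sum.inl i))))
        = ∑ K ∈ Finset.range r,
            (w b * (α K * ξ K i) - α K * (Fᵀ.mulVec (ξ K) b * ξ K i)) :=
      Finset.sum_congr rfl fun K hK => by
        rw [aux_zvec_b_lt F w r ξ (Finset.mem_range.1 hK), aux_zvec_a]; ring
    have h2 : (∑ K ∈ Finset.Ico r t,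
        zvec F w r ξ K (Sum.inl (Sum.inr b)) * zvec F w r ξ K (Sum.inl (Sum.inl i)))
        = ∑ K ∈ Finset.Ico r t, -(Fᵀ.mulVec (ξ K) b * ξ K i) :=
      Finset.sum_congr rfl fun K hK => by
        rw [aux_zvec_b_ge F w r ξ (not_lt.2 (Finset.mem_Ico.1 hK).1), aux_zvec_a]; ring
    rw [h1, h2, Finset.sum_sub_distrib, ← Finset.mul_sum, Finset.sum_neg_distrib,
      ← aux_yvec_apply] at h
    have hentry : (Fᵀ * Ymat r t α ξ) b i
        = (∑ K ∈ Finset.range r, α K * (Fᵀ.mulVec (ξ K) b * ξ K i))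
          + ∑ K ∈ Finset.Ico r t, Fᵀ.mulVec (ξ K) b * ξ K i := by
      rw [aux_FtY]
      simp [Matrix.sum_apply, vecMulVec_apply]
    simp only [Matrix.sub_apply, vecMulVec_apply, hentry]
    linarith
  -- condition 6 : PSD
  have hPSD : (fromBlocks (Ymat r t α ξ) (Matrix.of fun i (_ : Unit) => yvec r α ξ i)
      (Matrix.of fun (_ : Unit) j => yvec r α ξ j) 1).PosSemidef := by
    have hFB : fromBlocks (Ymat r t α ξ) (Matrix.of fun i (_ : Unit) => yvec r α ξ i)
        (Matrix.of fun (_ : Unit) j => yvec r α ξ j) 1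
        = ∑ K ∈ Finset.range r,
            α K • vecMulVec (Sum.elim (ξ K) fun _ : Unit => if K < r then (1:ℝ) else 0)
              (Sum.elim (ξ K) fun _ : Unit => if K < r then (1:ℝ) else 0)
          + ∑ K ∈ Finset.Ico r t,
              vecMulVec (Sum.elim (ξ K) fun _ : Unit => if K < r then (1:ℝ) else 0)
                (Sum.elim (ξ K) fun _ : Unit => if K < r then (1:ℝ) else 0) := by
      ext i j
      rcases i with i | u <;> rcases j with j | u' <;>
        simp only [Matrix.fromBlocks_apply₁₁, Matrix.fromBlocks_apply₁₂,
          Matrix.fromBlocks_apply₂₁, Matrix.fromBlocks_apply₂₂, Matrix.of_apply,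
          Matrix.add_apply, Matrix.sum_apply, Matrix.smul_apply, vecMulVec_apply,
          smul_eq_mul, Sum.elim_inl, Sum.elim_inr]
      · exact aux_Ymat_apply r t α ξ i j
      · have h1 : (∑ K ∈ Finset.range r, α K * (ξ K i * if K < r then (1:ℝ) else 0))
            = ∑ K ∈ Finset.range r, α K * ξ K i :=
          Finset.sum_congr rfl fun K hK => by
            rw [if_pos (Finset.mem_range.1 hK), mul_one]
        have h2 : (∑ K ∈ Finset.Ico r t, ξ K i * if K < r then (1:ℝ) else 0) = 0 :=
          Finset.sum_eq_zero fun K hK => by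
            rw [if_neg (not_lt.2 (Finset.mem_Ico.1 hK).1), mul_zero]
        rw [h1, h2, add_zero, aux_yvec_apply]
      · have h1 : (∑ K ∈ Finset.range r, α K * ((if K < r then (1:ℝ) else 0) * ξ K j))
            = ∑ K ∈ Finset.range r, α K * ξ K j :=
          Finset.sum_congr rfl fun K hK => by
            rw [if_pos (Finset.mem_range.1 hK), one_mul]
        have h2 : (∑ K ∈ Finset.Ico r t, (if K < r then (1:ℝ) else 0) * ξ K j) = 0 :=
          Finset.sum_eq_zero fun K hK => by
            rw [if_neg (not_lt.2 (Finset.mem_Ico.1 hK).1), zero_mul]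
        rw [h1, h2, add_zero, aux_yvec_apply]
      · have h1 : (∑ K ∈ Finset.range r,
            α K * ((if K < r then (1:ℝ) else 0) * if K < r then (1:ℝ) else 0))
            = ∑ K ∈ Finset.range r, α K :=
          Finset.sum_congr rfl fun K hK => by
            rw [if_pos (Finset.mem_range.1 hK), mul_one, mul_one]
        have h2 : (∑ K ∈ Finset.Ico r t,
            (if K < r then (1:ℝ) else 0) * if K < r then (1:ℝ) else 0) = 0 :=
          Finset.sum_eq_zero fun K hK => by
            rw [if_neg (not_lt.2 (Finset.mem_Ico.1 hK).1), zero_mul]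
        rw [h1, h2, add_zero, hαsum, Matrix.one_apply_eq]
    rw [hFB]
    exact psd_aux' r t α hα _
  refine ⟨⟨cond1, cond2, cond3, cond4, cond5, hPSD⟩, ?_⟩
  -- objective value
  have hfrob : ∀ {ι : Type} [Fintype ι] (A B : Matrix ι ι ℝ),
      frob A B = ∑ j, ∑ i, A i j * B i j := by
    intro ι _ A B
    simp [frob, Matrix.trace, Matrix.mul_apply, Matrix.diag, Matrix.transpose_apply]
  rw [hfrob, hfrob]
  simp only [Fintype.sum_sum_type, Finset.univ_unique, Finset.sum_singleton]
  simp only [Hhat, Matrix.fromBlocks_apply₁₁, Matrix.fromBlocks_apply₁₂,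
    Matrix.fromBlocks_apply₂₁, Matrix.fromBlocks_apply₂₂, Matrix.of_apply,
    Sum.elim_inl, Sum.elim_inr, Matrix.zero_apply, zero_mul, Finset.sum_const_zero,
    add_zero, zero_add, hXaa, hXau, hXua, hXuu, mul_one, dotProduct,
    Finset.sum_add_distrib]
  ring
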